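/- Let a, b, c be pairwise distinct real numbers, set P = a² + b² + c² − ab − ac − bc, and let Γ ∈ ℝ satisfy c/2 − ((a + b − 2c)/((a − b)(b − c)))·Γ = b/2 − ((a + c − 2b)/((b − c)(c − a)))·Γ. Then ((c − a)/(b − a))·Γ = −(a − c)²(b − c)²/(4P) < 0; in particular, there is no real number x with x² = ((c − a)/(b − a))·Γ. -/

import Mathlib

/-- Let a, b, c be pairwise distinct reals, P = a² + b² + c² − ab − ac − bc, and let Γ
satisfy c/2 − ((a+b−2c)/((a−b)(b−c)))·Γ = b/2 − ((a+c−2b)/((b−c)(c−a)))·Γ.  Then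
((c−a)/(b−a))·Γ = −(a−c)²(b−c)²/(4P) < 0; in particular no real x satisfies
x² = ((c−a)/(b−a))·Γ. -/
theorem Gamma_ratio_negative (a b c Γ : ℝ) (hab : a ≠ b) (hac : a ≠ c) (hbc : b ≠ c)
    (hΓ : c / 2 - ((a + b - 2 * c) / ((a - b) * (b - c))) * Γ
        = b / 2 - ((a + c - 2 * b) / ((b - c) * (c - a))) * Γ) :
    ((c - a) / (b - a)) * Γ
        = -((a - c) ^ 2 * (b - c) ^ 2)
          / (4 * (a ^ 2 + b ^ 2 + c ^ 2 - a * b - a * c - b * c)) ∧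
    ((c - a) / (b - a)) * Γ < 0 ∧
    ¬ ∃ x : ℝ, x ^ 2 = ((c - a) / (b - a)) * Γ := by
  have hab' : a - b ≠ 0 := sub_ne_zero.mpr hab
  have hba' : b - a ≠ 0 := sub_ne_zero.mpr hab.symm
  have hbc' : b - c ≠ 0 := sub_ne_zero.mpr hbc
  have hca' : c - a ≠ 0 := sub_ne_zero.mpr hac.symm
  have hac' : a - c ≠ 0 := sub_ne_zero.mpr hac
  have h1 : 0 < (a - b) ^ 2 := by positivity
  have h2 : 0 < (b - c) ^ 2 := by positivity
  have h3 : 0 < (a - c) ^ 2 := by positivity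
  have hP : 0 < a ^ 2 + b ^ 2 + c ^ 2 - a * b - a * c - b * c := by nlinarith
  have hP' : a ^ 2 + b ^ 2 + c ^ 2 - a * b - a * c - b * c ≠ 0 := ne_of_gt hP
  field_simp at hΓ
  have heq : ((c - a) / (b - a)) * Γ
      = -((a - c) ^ 2 * (b - c) ^ 2)
        / (4 * (a ^ 2 + b ^ 2 + c ^ 2 - a * b - a * c - b * c)) := by
    have hΓ2 : 8 * (a ^ 2 + b ^ 2 + c ^ 2 - a * b - a * c - b * c) * Γ
        = 2 * (b - c) ^ 2 * (c - a) * (a - b) := by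
      apply mul_left_cancel₀ hbc'
      linear_combination 2 * (b - c) * hΓ
    rw [div_mul_eq_mul_div, div_eq_div_iff hba' (mul_ne_zero four_ne_zero hP')]
    linear_combination ((c - a) / 2) * hΓ2
  have hneg : ((c - a) / (b - a)) * Γ < 0 := by
    rw [heq]
    apply div_neg_of_neg_of_pos
    · nlinarith
    · linarith
  exact ⟨heq, hneg, fun ⟨x, hx⟩ => absurd hx (by nlinarith [sq_nonneg x])⟩
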